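/- Let n, ℓ ≥ 1 and m ≥ 2 be integers, ε > 0, and let D ⊆ {0,1}^m. Then there exist K = 2^{m+2} − 4 functions C_1, …, C_K : (ZMod 2)^{m−1} → ZMod 2 with the following property. For X : {0,1}^n → {0,1}^n with ℓ-direct product X̄, define E(X,(x̄,r)) = (b(X̄(x̄),r), b(X̄(x̄+1),r), …, b(X̄(x̄+m−1),r)) for x̄ ∈ ({0,1}^n)^ℓ and r ∈ {0,1}^{ℓn}. If |Pr_{x̄,r}(E(X,(x̄,r)) ∈ D) − |D|/2^m| > ε (x̄ uniform on ({0,1}^n)^ℓ, r uniform on {0,1}^{ℓn}), then there exists i ∈ {1,…,K} such that Pr_{x̄,r}(C_i(b(X̄(x̄−m+1),r), b(X̄(x̄−m+2),r), …, b(X̄(x̄−1),r)) = b(X̄(x̄),r)) ≥ 1/2 + ε/m. -/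

import Mathlib

open scoped Classical

abbrev Str (k : ℕ) : Type := Fin k → ZMod 2

/-- inner product mod 2 of two block-strings in `({0,1}^n)^ℓ ≅ {0,1}^{ℓn}` -/
def ipb {ℓ n : ℕ} (x r : Fin ℓ → Str n) : ZMod 2 := ∑ i, ∑ j, x i j * r i j

/-- fraction of elements of a finite type satisfying `p` (probability under uniform distribution) -/
noncomputable def fr {α : Type} [Fintype α] (p : α → Prop) : ℝ :=
  ((Finset.univ.filter p).card : ℝ) / (Fintype.card α : ℝ)

/-- little-endian identification of `{0,1}^n` with `Fin (2^n)` -/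
def strToFin (n : ℕ) (x : Str n) : Fin (2 ^ n) :=
  ⟨∑ j : Fin n, (x j).val * 2 ^ (j : ℕ), by
    have hgeom : ∀ M : ℕ, (∑ j ∈ Finset.range M, 2 ^ j) < 2 ^ M := by
      intro M
      induction M with
      | zero => simp
      | succ K ih =>
        rw [Finset.sum_range_succ, pow_succ]
        omega
    calc ∑ j : Fin n, (x j).val * 2 ^ (j : ℕ)
        ≤ ∑ j : Fin n, 1 * 2 ^ (j : ℕ) := by
          refine Finset.sum_le_sum fun j _ => Nat.mul_le_mul_right _ ?_
          exact Nat.lt_succ_iff.mp (ZMod.val_lt (x j))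
      _ = ∑ j ∈ Finset.range n, 2 ^ j := by
          simp only [one_mul]
          exact Fin.sum_univ_eq_sum_range (fun j => 2 ^ j) n
      _ < 2 ^ n := hgeom n⟩

/-- inverse identification of `Fin (2^n)` with `{0,1}^n` -/
def finToStr (n : ℕ) (v : Fin (2 ^ n)) : Str n :=
  fun j => (((v : ℕ) / 2 ^ (j : ℕ)) % 2 : ℕ)

/-- addition of an integer constant modulo `2^n`, on `{0,1}^n` identified with `ZMod (2^n)` -/
def shiftStr (n : ℕ) (x : Str n) (k : ℤ) : Str n :=
  haveI : NeZero (2 ^ n) := ⟨(by positivity : (0:ℕ) < 2 ^ n).ne'⟩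
  finToStr n ⟨(((strToFin n x : ℕ) : ZMod (2 ^ n)) + (k : ZMod (2 ^ n))).val, ZMod.val_lt _⟩


-- infrastructure lemmas
lemma card_str (k : ℕ) : Fintype.card (Str k) = 2 ^ k := by
  simp [Str]

lemma strToFin_finToStr (n : ℕ) (v : Fin (2 ^ n)) : strToFin n (finToStr n v) = v := by
  have key : ∀ M : ℕ, ∑ j ∈ Finset.range M, ((v : ℕ) / 2 ^ j % 2) * 2 ^ j = (v : ℕ) % 2 ^ M := by
    intro M
    induction M with
    | zero => simp [Nat.mod_one]
    | succ K ih =>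
      rw [Finset.sum_range_succ, ih, Nat.mod_pow_succ]
      ring
  apply Fin.ext
  show (∑ j : Fin n, ((finToStr n v) j).val * 2 ^ (j:ℕ)) = (v:ℕ)
  have h1 : ∀ j : Fin n, ((finToStr n v) j).val = (v : ℕ) / 2 ^ (j:ℕ) % 2 := by
    intro j
    simp [finToStr, ZMod.val_natCast]
  calc (∑ j : Fin n, ((finToStr n v) j).val * 2 ^ (j:ℕ))
      = ∑ j ∈ Finset.range n, ((v:ℕ) / 2 ^ j % 2) * 2 ^ j := by
        rw [← Fin.sum_univ_eq_sum_range]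
        exact Finset.sum_congr rfl fun j _ => by rw [h1]
    _ = (v : ℕ) % 2 ^ n := key n
    _ = (v : ℕ) := Nat.mod_eq_of_lt v.isLt

lemma finToStr_strToFin (n : ℕ) (x : Str n) : finToStr n (strToFin n x) = x := by
  have hinj : Function.Injective (finToStr n) := by
    intro a b h
    have := congrArg (strToFin n) h
    rwa [strToFin_finToStr, strToFin_finToStr] at this
  have hbij : Function.Bijective (finToStr n) := by
    rw [Fintype.bijective_iff_injective_and_card]
    refine ⟨hinj, by simp [card_str]⟩
  obtain ⟨v, rfl⟩ := hbij.surjective x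
  rw [strToFin_finToStr]
lemma strToFin_shiftStr (n : ℕ) (x : Str n) (k : ℤ) :
    haveI : NeZero (2 ^ n) := ⟨(by positivity : (0:ℕ) < 2 ^ n).ne'⟩
    ((strToFin n (shiftStr n x k) : ℕ) : ZMod (2 ^ n))
      = ((strToFin n x : ℕ) : ZMod (2 ^ n)) + (k : ZMod (2 ^ n)) := by
  haveI : NeZero (2 ^ n) := ⟨(by positivity : (0:ℕ) < 2 ^ n).ne'⟩
  rw [shiftStr, strToFin_finToStr]
  simp [ZMod.natCast_val, ZMod.cast_id]

lemma shiftStr_shiftStr (n : ℕ) (x : Str n) (a b : ℤ) :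
    shiftStr n (shiftStr n x a) b = shiftStr n x (a + b) := by
  haveI : NeZero (2 ^ n) := ⟨(by positivity : (0:ℕ) < 2 ^ n).ne'⟩
  have h := strToFin_shiftStr n x a
  conv_lhs => rw [shiftStr]
  conv_rhs => rw [shiftStr]
  apply congrArg (finToStr n)
  apply Fin.ext
  show (((strToFin n (shiftStr n x a) : ℕ) : ZMod (2^n)) + (b : ZMod (2^n))).val = _
  have h2 : ((strToFin n (shiftStr n x a) : ℕ) : ZMod (2^n)) + (b : ZMod (2^n))
      = ((strToFin n x : ℕ) : ZMod (2^n)) + ((a + b : ℤ) : ZMod (2^n)) := by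
    rw [h]; push_cast; ring
  rw [h2]

lemma shiftStr_zero (n : ℕ) (x : Str n) : shiftStr n x 0 = x := by
  haveI : NeZero (2 ^ n) := ⟨(by positivity : (0:ℕ) < 2 ^ n).ne'⟩
  rw [shiftStr]
  have : (((strToFin n x : ℕ) : ZMod (2 ^ n)) + ((0:ℤ) : ZMod (2 ^ n))).val
      = (strToFin n x : ℕ) := by
    simp [ZMod.val_natCast_of_lt (strToFin n x).isLt]
  simp only [this]
  rw [Fin.eta]
  exact finToStr_strToFin n x

-- fr lemmas
lemma fr_eq_sum {α : Type} [Fintype α] (p : α → Prop) :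
    fr p = (∑ a : α, if p a then (1:ℝ) else 0) / (Fintype.card α : ℝ) := by
  rw [fr, Finset.sum_boole]

lemma fr_congr {α : Type} [Fintype α] {p q : α → Prop} (h : ∀ a, p a ↔ q a) :
    fr p = fr q := by
  have : p = q := funext fun a => propext (h a)
  rw [this]

lemma fr_comp_equiv {α : Type} [Fintype α] (e : α ≃ α) (p : α → Prop) :
    fr (fun a => p (e a)) = fr p := by
  unfold fr
  congr 2
  apply Finset.card_bij' (fun a _ => e a) (fun b _ => e.symm b) <;> simp

lemma fr_const {α : Type} [Fintype α] [Nonempty α] (P : Prop) :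
    fr (fun _ : α => P) = if P then 1 else 0 := by
  by_cases h : P <;> simp [fr, h, Finset.filter_true_of_mem, div_self,
    (Nat.cast_pos.mpr Fintype.card_pos).ne']

lemma fr_not {α : Type} [Fintype α] [Nonempty α] (p : α → Prop) :
    fr (fun a => ¬ p a) = 1 - fr p := by
  have hc : (Fintype.card α : ℝ) ≠ 0 := (Nat.cast_pos.mpr Fintype.card_pos).ne'
  have h := Finset.card_filter_add_card_filter_not (s := (Finset.univ : Finset α)) (p := p)
  rw [Finset.card_univ] at h
  unfold fr
  rw [eq_sub_iff_add_eq, ← add_div, div_eq_one_iff_eq hc]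
  have e : (@Finset.filter α (fun a => ¬ p a)
        (fun a => Classical.propDecidable ((fun a => ¬ p a) a)) Finset.univ)
      = @Finset.filter α (fun a => ¬ p a) (fun a => instDecidableNot) Finset.univ :=
    congrArg (fun i => @Finset.filter α (fun a => ¬ p a) i Finset.univ)
      (funext fun a => Subsingleton.elim _ _)
  rw [e]
  exact_mod_cast congrArg (fun k : ℕ => (k:ℝ)) (by omega :
    (@Finset.filter α (fun a => ¬ p a) (fun a => instDecidableNot) Finset.univ).card
      + (Finset.univ.filter p).card = Fintype.card α)
noncomputable def ind (P : Prop) : ℝ := if P then 1 else 0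

lemma ind_eq_ite {P : Prop} [Decidable P] : ind P = if P then (1:ℝ) else 0 := by
  by_cases h : P <;> simp [ind, h]

lemma ind_true {P : Prop} (h : P) : ind P = 1 := if_pos h
lemma ind_false {P : Prop} (h : ¬ P) : ind P = 0 := if_neg h

lemma fr_eq_sum' {α : Type} [Fintype α] (p : α → Prop) :
    fr p = (∑ a : α, ind (p a)) / (Fintype.card α : ℝ) := by
  rw [fr]
  congr 1
  unfold ind
  rw [Finset.sum_boole]

lemma sum_zmod2 (f : ZMod 2 → ℝ) : ∑ g : ZMod 2, f g = f 0 + f 1 := by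
  have : (Finset.univ : Finset (ZMod 2)) = {0, 1} := by decide
  rw [this, Finset.sum_insert (by decide), Finset.sum_singleton]

lemma zmod2_cases (z : ZMod 2) : z = 0 ∨ z = 1 := by
  revert z; decide

-- the bit random variables
def Bbit (n ℓ : ℕ) (X : Str n → Str n) (t : ℤ)
    (ω : (Fin ℓ → Str n) × (Fin ℓ → Str n)) : ZMod 2 :=
  ipb (fun i => X (shiftStr n (ω.1 i) t)) ω.2

def shiftΩ (n ℓ : ℕ) (c : ℤ) :
    ((Fin ℓ → Str n) × (Fin ℓ → Str n)) ≃ ((Fin ℓ → Str n) × (Fin ℓ → Str n)) where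
  toFun ω := (fun i => shiftStr n (ω.1 i) c, ω.2)
  invFun ω := (fun i => shiftStr n (ω.1 i) (-c), ω.2)
  left_inv ω := by
    refine Prod.ext ?_ rfl
    funext i
    simp [shiftStr_shiftStr, shiftStr_zero]
  right_inv ω := by
    refine Prod.ext ?_ rfl
    funext i
    simp [shiftStr_shiftStr, shiftStr_zero]

lemma Bbit_shiftΩ (n ℓ : ℕ) (X : Str n → Str n) (t c : ℤ)
    (ω : (Fin ℓ → Str n) × (Fin ℓ → Str n)) :
    Bbit n ℓ X t (shiftΩ n ℓ c ω) = Bbit n ℓ X (t + c) ω := by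
  unfold Bbit shiftΩ
  simp only [Equiv.coe_fn_mk]
  congr 1
  funext i
  rw [shiftStr_shiftStr, add_comm]

-- hybrid words
def hybW (n ℓ m : ℕ) (X : Str n → Str n) (j : ℕ)
    (ω : (Fin ℓ → Str n) × (Fin ℓ → Str n)) (u : Str m) : Str m :=
  fun k => if (k : ℕ) < j then Bbit n ℓ X ((k : ℕ) - (m : ℤ)) ω else u k

noncomputable def qf (n ℓ m : ℕ) (X : Str n → Str n) (D : Finset (Str m)) (j : ℕ) : ℝ :=
  (∑ u : Str m, fr (fun ω : (Fin ℓ → Str n) × (Fin ℓ → Str n) =>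
    hybW n ℓ m X j ω u ∈ D)) / 2 ^ m

def wP (n ℓ m : ℕ) (X : Str n → Str n) (j : ℕ) (g : ZMod 2) (u : Str m)
    (ω : (Fin ℓ → Str n) × (Fin ℓ → Str n)) : Str m :=
  fun k => if (k : ℕ) < j then Bbit n ℓ X ((k : ℕ) - (m : ℤ)) ω
    else if (k : ℕ) = j then g else u k

lemma wP_beta (n ℓ m : ℕ) (X : Str n → Str n) (j : ℕ) (u : Str m) ω :
    wP n ℓ m X j (Bbit n ℓ X ((j : ℤ) - m) ω) u ω = hybW n ℓ m X (j+1) ω u := by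
  funext k
  unfold wP hybW
  by_cases h1 : (k : ℕ) < j
  · rw [if_pos h1, if_pos (by omega)]
  · by_cases h2 : (k : ℕ) = j
    · rw [if_neg h1, if_pos h2, if_pos (by omega)]
      norm_num [h2]
    · rw [if_neg h1, if_neg h2, if_neg (by omega)]

lemma hybW_eq_wP (n ℓ m : ℕ) (X : Str n → Str n) (j : ℕ) (hj : j < m) (u : Str m) ω :
    hybW n ℓ m X j ω u = wP n ℓ m X j (u ⟨j, hj⟩) u ω := by
  funext k
  unfold wP hybW
  by_cases h1 : (k : ℕ) < j
  · rw [if_pos h1, if_pos h1]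
  · by_cases h2 : (k : ℕ) = j
    · rw [if_neg h1, if_neg h1, if_pos h2]
      congr 1
      exact Fin.ext h2
    · rw [if_neg h1, if_neg h1, if_neg h2]

lemma wP_update (n ℓ m : ℕ) (X : Str n → Str n) (j : ℕ) (hj : j < m) (g c : ZMod 2)
    (u : Str m) ω :
    wP n ℓ m X j g (Function.update u ⟨j, hj⟩ c) ω = wP n ℓ m X j g u ω := by
  funext k
  unfold wP
  by_cases h1 : (k : ℕ) < j
  · rw [if_pos h1, if_pos h1]
  · by_cases h2 : (k : ℕ) = j
    · rw [if_neg h1, if_neg h1, if_pos h2, if_pos h2]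
    · rw [if_neg h1, if_neg h1, if_neg h2, if_neg h2,
        Function.update_of_ne (fun h => h2 (by rw [h]))]
lemma zmod2_add11 (z : ZMod 2) : z + 1 + 1 = z := by revert z; decide
lemma zmod2_ne_imp {x y : ZMod 2} (h : x ≠ y) : x = y + 1 := by revert x y; decide

noncomputable def SA (n ℓ m : ℕ) (X : Str n → Str n) (D : Finset (Str m)) (j : ℕ) : ℝ :=
  ∑ u : Str m, ∑ ω : (Fin ℓ → Str n) × (Fin ℓ → Str n), ind (hybW n ℓ m X j ω u ∈ D)

lemma qf_eq (n ℓ m : ℕ) (X : Str n → Str n) (D : Finset (Str m)) (j : ℕ) :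
    qf n ℓ m X D j
      = SA n ℓ m X D j / (Fintype.card ((Fin ℓ → Str n) × (Fin ℓ → Str n)) : ℝ) / 2 ^ m := by
  unfold qf SA
  have h1 : (∑ u : Str m, fr fun ω : (Fin ℓ → Str n) × (Fin ℓ → Str n) =>
        hybW n ℓ m X j ω u ∈ D)
      = (∑ u : Str m, ∑ ω : (Fin ℓ → Str n) × (Fin ℓ → Str n),
          ind (hybW n ℓ m X j ω u ∈ D))
        / (Fintype.card ((Fin ℓ → Str n) × (Fin ℓ → Str n)) : ℝ) := by
    rw [Finset.sum_div]
    exact Finset.sum_congr rfl fun u _ => fr_eq_sum' _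
  rw [h1]

lemma sum_over_g (n ℓ m : ℕ) (X : Str n → Str n) (D : Finset (Str m)) (j : ℕ)
    (u : Str m) (ω : (Fin ℓ → Str n) × (Fin ℓ → Str n)) :
    ∑ g : ZMod 2, ind ((g + (if wP n ℓ m X j g u ω ∈ D then (0 : ZMod 2) else 1)
        = Bbit n ℓ X ((j : ℤ) - m) ω))
    = ind (hybW n ℓ m X (j+1) ω u ∈ D) + 1
      - ind (wP n ℓ m X j (Bbit n ℓ X ((j : ℤ) - m) ω + 1) u ω ∈ D) := by
  rw [sum_zmod2, ← wP_beta n ℓ m X j u ω]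
  rcases zmod2_cases (Bbit n ℓ X ((j : ℤ) - m) ω) with h | h <;> rw [h] <;>
    by_cases h0 : wP n ℓ m X j 0 u ω ∈ D <;> by_cases h1 : wP n ℓ m X j 1 u ω ∈ D <;>
    simp [ind, h0, h1, show ((0:ZMod 2) + 1 = 1) from by decide,
      show ((1:ZMod 2) + 1 = 0) from by decide] <;> norm_num

lemma sum_u_pair (n ℓ m : ℕ) (X : Str n → Str n) (D : Finset (Str m)) (j : ℕ)
    (hj : j < m) (β : ZMod 2) (ω : (Fin ℓ → Str n) × (Fin ℓ → Str n)) :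
    ∑ u : Str m, (ind (wP n ℓ m X j β u ω ∈ D) + ind (wP n ℓ m X j (β + 1) u ω ∈ D))
    = 2 * ∑ u : Str m, ind (hybW n ℓ m X j ω u ∈ D) := by
  have hinv : Function.Involutive
      (fun u : Str m => Function.update u ⟨j, hj⟩ (u ⟨j, hj⟩ + 1)) := by
    intro u
    simp only [Function.update_self, Function.update_idem, zmod2_add11,
      Function.update_eq_self]
  set φ := Function.Involutive.toPerm _ hinv with hφ
  have hφapp : ∀ u : Str m, φ u = Function.update u ⟨j, hj⟩ (u ⟨j, hj⟩ + 1) := fun u => rfl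
  have hsum : ∑ u : Str m, ind (hybW n ℓ m X j ω u ∈ D)
      = ∑ u : Str m, ind (hybW n ℓ m X j ω (φ u) ∈ D) :=
    (Equiv.sum_comp φ (fun u => ind (hybW n ℓ m X j ω u ∈ D))).symm
  have key : ∀ u : Str m,
      ind (hybW n ℓ m X j ω u ∈ D) + ind (hybW n ℓ m X j ω (φ u) ∈ D)
      = ind (wP n ℓ m X j β u ω ∈ D) + ind (wP n ℓ m X j (β + 1) u ω ∈ D) := by
    intro u
    have e1 : hybW n ℓ m X j ω u = wP n ℓ m X j (u ⟨j, hj⟩) u ω := hybW_eq_wP n ℓ m X j hj u ω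
    have e2 : hybW n ℓ m X j ω (φ u) = wP n ℓ m X j (u ⟨j, hj⟩ + 1) u ω := by
      rw [hφapp, hybW_eq_wP n ℓ m X j hj _ ω, Function.update_self, wP_update n ℓ m X j hj]
    rw [e1, e2]
    rcases eq_or_ne (u ⟨j, hj⟩) β with h | h
    · rw [h]
    · have h1 : u ⟨j, hj⟩ = β + 1 := zmod2_ne_imp h
      have h2 : u ⟨j, hj⟩ + 1 = β := by rw [h1, zmod2_add11]
      rw [h2, h1, add_comm]
  calc ∑ u : Str m, (ind (wP n ℓ m X j β u ω ∈ D) + ind (wP n ℓ m X j (β + 1) u ω ∈ D))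
      = ∑ u : Str m, (ind (hybW n ℓ m X j ω u ∈ D) + ind (hybW n ℓ m X j ω (φ u) ∈ D)) :=
        Finset.sum_congr rfl fun u _ => (key u).symm
    _ = (∑ u : Str m, ind (hybW n ℓ m X j ω u ∈ D))
        + ∑ u : Str m, ind (hybW n ℓ m X j ω (φ u) ∈ D) := Finset.sum_add_distrib
    _ = 2 * ∑ u : Str m, ind (hybW n ℓ m X j ω u ∈ D) := by rw [← hsum]; ring
lemma count_main (n ℓ m : ℕ) (X : Str n → Str n) (D : Finset (Str m)) (j : ℕ)
    (hj : j < m) :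
    ∑ g : ZMod 2, ∑ u : Str m, ∑ ω : (Fin ℓ → Str n) × (Fin ℓ → Str n),
        ind ((g + (if wP n ℓ m X j g u ω ∈ D then (0 : ZMod 2) else 1)
          = Bbit n ℓ X ((j : ℤ) - m) ω))
    = 2 ^ m * (Fintype.card ((Fin ℓ → Str n) × (Fin ℓ → Str n)) : ℝ)
      + 2 * (SA n ℓ m X D (j+1) - SA n ℓ m X D j) := by
  have step1 : ∑ g : ZMod 2, ∑ u : Str m, ∑ ω : (Fin ℓ → Str n) × (Fin ℓ → Str n),
        ind ((g + (if wP n ℓ m X j g u ω ∈ D then (0 : ZMod 2) else 1)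
          = Bbit n ℓ X ((j : ℤ) - m) ω))
      = ∑ u : Str m, ∑ ω : (Fin ℓ → Str n) × (Fin ℓ → Str n),
          (ind (hybW n ℓ m X (j+1) ω u ∈ D) + 1
            - ind (wP n ℓ m X j (Bbit n ℓ X ((j : ℤ) - m) ω + 1) u ω ∈ D)) := by
    rw [Finset.sum_comm]
    refine Finset.sum_congr rfl fun u _ => ?_
    rw [Finset.sum_comm]
    exact Finset.sum_congr rfl fun ω _ => sum_over_g n ℓ m X D j u ω
  have step2 : ∑ u : Str m, ∑ ω : (Fin ℓ → Str n) × (Fin ℓ → Str n),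
        ind (wP n ℓ m X j (Bbit n ℓ X ((j : ℤ) - m) ω + 1) u ω ∈ D)
      = 2 * SA n ℓ m X D j - SA n ℓ m X D (j+1) := by
    rw [Finset.sum_comm]
    have perω : ∀ ω : (Fin ℓ → Str n) × (Fin ℓ → Str n),
        ∑ u : Str m, ind (wP n ℓ m X j (Bbit n ℓ X ((j : ℤ) - m) ω + 1) u ω ∈ D)
        = 2 * (∑ u : Str m, ind (hybW n ℓ m X j ω u ∈ D))
          - ∑ u : Str m, ind (hybW n ℓ m X (j+1) ω u ∈ D) := by
      intro ω
      have hp := sum_u_pair n ℓ m X D j hj (Bbit n ℓ X ((j : ℤ) - m) ω) ω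
      rw [Finset.sum_add_distrib] at hp
      have hb : ∑ u : Str m, ind (wP n ℓ m X j (Bbit n ℓ X ((j : ℤ) - m) ω) u ω ∈ D)
          = ∑ u : Str m, ind (hybW n ℓ m X (j+1) ω u ∈ D) :=
        Finset.sum_congr rfl fun u _ => by rw [wP_beta]
      linarith [hp, hb]
    rw [Finset.sum_congr rfl fun ω _ => perω ω, Finset.sum_sub_distrib,
      ← Finset.mul_sum]
    have c1 : ∑ ω : (Fin ℓ → Str n) × (Fin ℓ → Str n), ∑ u : Str m,
        ind (hybW n ℓ m X j ω u ∈ D) = SA n ℓ m X D j := by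
      unfold SA; exact Finset.sum_comm
    have c2 : ∑ ω : (Fin ℓ → Str n) × (Fin ℓ → Str n), ∑ u : Str m,
        ind (hybW n ℓ m X (j+1) ω u ∈ D) = SA n ℓ m X D (j+1) := by
      unfold SA; exact Finset.sum_comm
    linarith [c1, c2]
  have step3 : ∑ u : Str m, ∑ ω : (Fin ℓ → Str n) × (Fin ℓ → Str n), (1:ℝ)
      = 2 ^ m * (Fintype.card ((Fin ℓ → Str n) × (Fin ℓ → Str n)) : ℝ) := by
    simp [Finset.sum_const, Finset.card_univ, card_str]
  calc ∑ g : ZMod 2, ∑ u : Str m, ∑ ω : (Fin ℓ → Str n) × (Fin ℓ → Str n),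
        ind ((g + (if wP n ℓ m X j g u ω ∈ D then (0 : ZMod 2) else 1)
          = Bbit n ℓ X ((j : ℤ) - m) ω))
      = ∑ u : Str m, ∑ ω : (Fin ℓ → Str n) × (Fin ℓ → Str n),
          (ind (hybW n ℓ m X (j+1) ω u ∈ D) + 1
            - ind (wP n ℓ m X j (Bbit n ℓ X ((j : ℤ) - m) ω + 1) u ω ∈ D)) := step1
    _ = (∑ u : Str m, ∑ ω : (Fin ℓ → Str n) × (Fin ℓ → Str n),
          ind (hybW n ℓ m X (j+1) ω u ∈ D))
        + (∑ u : Str m, ∑ ω : (Fin ℓ → Str n) × (Fin ℓ → Str n), (1:ℝ))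
        - ∑ u : Str m, ∑ ω : (Fin ℓ → Str n) × (Fin ℓ → Str n),
            ind (wP n ℓ m X j (Bbit n ℓ X ((j : ℤ) - m) ω + 1) u ω ∈ D) := by
        simp only [Finset.sum_sub_distrib, Finset.sum_add_distrib]
    _ = 2 ^ m * (Fintype.card ((Fin ℓ → Str n) × (Fin ℓ → Str n)) : ℝ)
        + 2 * (SA n ℓ m X D (j+1) - SA n ℓ m X D j) := by
        rw [step2, step3]
        unfold SA
        ring

noncomputable def Sgu (n ℓ m : ℕ) (X : Str n → Str n) (D : Finset (Str m)) (j : ℕ)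
    (g : ZMod 2) (u : Str m) : ℝ :=
  fr (fun ω : (Fin ℓ → Str n) × (Fin ℓ → Str n) =>
    (g + (if wP n ℓ m X j g u ω ∈ D then (0 : ZMod 2) else 1)
      = Bbit n ℓ X ((j : ℤ) - m) ω))

lemma sum_Sgu (n ℓ m : ℕ) (X : Str n → Str n) (D : Finset (Str m)) (j : ℕ)
    (hj : j < m) :
    ∑ g : ZMod 2, ∑ u : Str m, Sgu n ℓ m X D j g u
      = 2 ^ m + 2 ^ (m+1) * (qf n ℓ m X D (j+1) - qf n ℓ m X D j) := by
  have hN : (0:ℝ) < (Fintype.card ((Fin ℓ → Str n) × (Fin ℓ → Str n)) : ℝ) :=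
    Nat.cast_pos.mpr Fintype.card_pos
  have hexp : ∑ g : ZMod 2, ∑ u : Str m, Sgu n ℓ m X D j g u
      = (∑ g : ZMod 2, ∑ u : Str m, ∑ ω : (Fin ℓ → Str n) × (Fin ℓ → Str n),
          ind ((g + (if wP n ℓ m X j g u ω ∈ D then (0 : ZMod 2) else 1)
            = Bbit n ℓ X ((j : ℤ) - m) ω)))
        / (Fintype.card ((Fin ℓ → Str n) × (Fin ℓ → Str n)) : ℝ) := by
    rw [Finset.sum_div]
    refine Finset.sum_congr rfl fun g _ => ?_
    rw [Finset.sum_div]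
    exact Finset.sum_congr rfl fun u _ => fr_eq_sum' _
  rw [hexp, count_main n ℓ m X D j hj, qf_eq, qf_eq]
  have h2m : (0:ℝ) < 2 ^ m := by positivity
  field_simp
  ring
lemma qf_zero (n ℓ m : ℕ) (X : Str n → Str n) (D : Finset (Str m)) :
    qf n ℓ m X D 0 = (D.card : ℝ) / 2 ^ m := by
  unfold qf
  have h1 : ∀ u : Str m, fr (fun ω : (Fin ℓ → Str n) × (Fin ℓ → Str n) =>
      hybW n ℓ m X 0 ω u ∈ D) = ind (u ∈ D) := by
    intro u
    have hw : ∀ ω, hybW n ℓ m X 0 ω u = u := by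
      intro ω; funext k; unfold hybW; rw [if_neg (by omega)]
    rw [fr_congr fun ω => by rw [hw ω]]
    rw [fr_const]
    rfl
  rw [Finset.sum_congr rfl fun u _ => h1 u]
  congr 1
  rw [Finset.sum_congr rfl fun u _ => ind_eq_ite]
  rw [Finset.sum_ite_mem, Finset.univ_inter, Finset.sum_const, nsmul_eq_mul, mul_one]

lemma qf_m (n ℓ m : ℕ) (X : Str n → Str n) (D : Finset (Str m)) :
    qf n ℓ m X D m
      = fr (fun ω : (Fin ℓ → Str n) × (Fin ℓ → Str n) =>
          (fun k : Fin m => Bbit n ℓ X (k : ℤ) ω) ∈ D) := by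
  unfold qf
  have h1 : ∀ u : Str m, fr (fun ω : (Fin ℓ → Str n) × (Fin ℓ → Str n) =>
        hybW n ℓ m X m ω u ∈ D)
      = fr (fun ω : (Fin ℓ → Str n) × (Fin ℓ → Str n) =>
          (fun k : Fin m => Bbit n ℓ X (k : ℤ) ω) ∈ D) := by
    intro u
    have hw : ∀ ω, hybW n ℓ m X m ω u = fun k : Fin m => Bbit n ℓ X ((k:ℤ) - m) ω := by
      intro ω; funext k; unfold hybW; rw [if_pos k.isLt]
    rw [fr_congr fun ω => by rw [hw ω]]
    rw [← fr_comp_equiv (shiftΩ n ℓ (m : ℤ))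
      (fun ω => (fun k : Fin m => Bbit n ℓ X ((k:ℤ) - m) ω) ∈ D)]
    apply fr_congr
    intro ω
    have : (fun k : Fin m => Bbit n ℓ X ((k:ℤ) - m) (shiftΩ n ℓ (m : ℤ) ω))
        = fun k : Fin m => Bbit n ℓ X (k : ℤ) ω := by
      funext k
      rw [Bbit_shiftΩ]
      norm_num
    rw [this]
  rw [Finset.sum_congr rfl fun u _ => h1 u, Finset.sum_const, Finset.card_univ, card_str,
    nsmul_eq_mul]
  have h2m : ((2:ℝ)) ^ m ≠ 0 := by positivity
  field_simp
  push_cast; ring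

lemma telescope_abs (f : ℕ → ℝ) (m : ℕ) (hm : 0 < m) (ε : ℝ) (h : ε < |f m - f 0|) :
    ∃ j < m, ε / m < |f (j+1) - f j| := by
  by_contra hc
  push_neg at hc
  have h1 : |f m - f 0| ≤ ∑ j ∈ Finset.range m, |f (j+1) - f j| := by
    rw [← Finset.sum_range_sub f m]
    exact Finset.abs_sum_le_sum_abs _ _
  have h2 : ∑ j ∈ Finset.range m, |f (j+1) - f j| ≤ m * (ε / m) := by
    have := Finset.sum_le_card_nsmul (Finset.range m) (fun j => |f (j+1) - f j|) (ε / m)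
      (fun j hj => hc j (Finset.mem_range.mp hj))
    rwa [Finset.card_range, nsmul_eq_mul] at this
  have h3 : (m:ℝ) * (ε / m) = ε := by
    field_simp
  linarith

abbrev ParamSet (m : ℕ) : Type :=
  (j : Fin m) × (ZMod 2 × (Fin (m - 1 - (j:ℕ)) → ZMod 2) × ZMod 2)

lemma geo_sum (M : ℕ) : ∑ j ∈ Finset.range M, 2 ^ j = 2 ^ M - 1 := by
  induction M with
  | zero => simp
  | succ K ih =>
    rw [Finset.sum_range_succ, ih, pow_succ]
    have : 1 ≤ 2 ^ K := Nat.one_le_two_pow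
    omega

lemma card_ParamSet (m : ℕ) : Fintype.card (ParamSet m) = 2 ^ (m + 2) - 4 := by
  rw [Fintype.card_sigma]
  have h1 : ∀ j : Fin m, Fintype.card (ZMod 2 × (Fin (m - 1 - (j:ℕ)) → ZMod 2) × ZMod 2)
      = 4 * 2 ^ (m - 1 - (j:ℕ)) := by
    intro j
    simp [Fintype.card_prod, Fintype.card_fun]
    ring
  rw [Finset.sum_congr rfl fun j _ => h1 j]
  have h2 : ∑ j ∈ Finset.range m, 4 * 2 ^ (m - 1 - j) = 4 * ∑ j ∈ Finset.range m, 2 ^ (m - 1 - j) := by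
    rw [Finset.mul_sum]
  have h3 : ∑ j ∈ Finset.range m, 2 ^ (m - 1 - j) = ∑ j ∈ Finset.range m, 2 ^ j :=
    Finset.sum_range_reflect (fun j => 2 ^ j) m
  have h4 : ∑ j : Fin m, 4 * 2 ^ (m - 1 - (j:ℕ)) = ∑ j ∈ Finset.range m, 4 * 2 ^ (m - 1 - j) :=
    Fin.sum_univ_eq_sum_range (fun j => 4 * 2 ^ (m - 1 - j)) m
  rw [h4, h2, h3, geo_sum]
  have : 1 ≤ 2 ^ m := Nat.one_le_two_pow
  have hp : 2 ^ (m + 2) = 4 * 2 ^ m := by ring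
  omega
noncomputable def predC (m : ℕ) (D : Finset (Str m)) (P : ParamSet m) :
    (Fin (m - 1) → ZMod 2) → ZMod 2 :=
  fun v => P.2.2.2 + P.2.1 + (if (fun k : Fin m =>
      if h : (k : ℕ) < (P.1 : ℕ) then
        v ⟨(k : ℕ) + (m - 1) - (P.1 : ℕ), by
          have hk := k.isLt; have hj := P.1.isLt; omega⟩
      else if (k : ℕ) = (P.1 : ℕ) then P.2.1
      else if h2 : (k : ℕ) - (P.1 : ℕ) - 1 < m - 1 - (P.1 : ℕ) then
        P.2.2.1 ⟨(k : ℕ) - (P.1 : ℕ) - 1, h2⟩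
      else P.2.1) ∈ D then 0 else 1)

lemma predC_event (n ℓ m : ℕ) (X : Str n → Str n) (D : Finset (Str m)) (jf : Fin m)
    (g s : ZMod 2) (u : Str m) :
    fr (fun ω : (Fin ℓ → Str n) × (Fin ℓ → Str n) =>
        predC m D ⟨jf, (g,
            fun t => u ⟨(t : ℕ) + (jf : ℕ) + 1, by have := t.isLt; have := jf.isLt; omega⟩,
            s)⟩
          (fun k : Fin (m - 1) => Bbit n ℓ X ((k : ℤ) + 1 - m) ω)
        = Bbit n ℓ X 0 ω)
    = fr (fun ω : (Fin ℓ → Str n) × (Fin ℓ → Str n) =>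
        s + (g + (if wP n ℓ m X (jf : ℕ) g u ω ∈ D then (0 : ZMod 2) else 1))
          = Bbit n ℓ X (((jf : ℕ) : ℤ) - m) ω) := by
  rw [← fr_comp_equiv (shiftΩ n ℓ ((m : ℤ) - (jf : ℕ)))
    (fun ω => s + (g + (if wP n ℓ m X (jf : ℕ) g u ω ∈ D then (0 : ZMod 2) else 1))
      = Bbit n ℓ X (((jf : ℕ) : ℤ) - m) ω)]
  apply fr_congr
  intro ω
  have hword : (fun k : Fin m =>
      if h : (k : ℕ) < (jf : ℕ) then
        (fun k' : Fin (m - 1) => Bbit n ℓ X ((k' : ℤ) + 1 - m) ω)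
          ⟨(k : ℕ) + (m - 1) - (jf : ℕ), by have := k.isLt; have := jf.isLt; omega⟩
      else if (k : ℕ) = (jf : ℕ) then g
      else if h2 : (k : ℕ) - (jf : ℕ) - 1 < m - 1 - (jf : ℕ) then
        (fun t : Fin (m - 1 - (jf : ℕ)) =>
            u ⟨(t : ℕ) + (jf : ℕ) + 1, by have := t.isLt; have := jf.isLt; omega⟩)
          ⟨(k : ℕ) - (jf : ℕ) - 1, h2⟩
      else g)
      = wP n ℓ m X (jf : ℕ) g u (shiftΩ n ℓ ((m : ℤ) - (jf : ℕ)) ω) := by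
    funext k
    have hk := k.isLt
    have hj := jf.isLt
    unfold wP
    by_cases h1 : (k : ℕ) < (jf : ℕ)
    · rw [dif_pos h1, if_pos h1, Bbit_shiftΩ]
      show Bbit n ℓ X ((((k : ℕ) + (m - 1) - (jf : ℕ) : ℕ) : ℤ) + 1 - (m : ℤ)) ω
        = Bbit n ℓ X ((k : ℤ) - m + ((m : ℤ) - (jf : ℕ))) ω
      congr 1
      omega
    · by_cases h2 : (k : ℕ) = (jf : ℕ)
      · rw [dif_neg h1, if_pos h2, if_neg h1, if_pos h2]
      · rw [dif_neg h1, if_neg h2, if_neg h1, if_neg h2,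
          dif_pos (show (k : ℕ) - (jf : ℕ) - 1 < m - 1 - (jf : ℕ) by omega)]
        show u ⟨(k : ℕ) - (jf : ℕ) - 1 + (jf : ℕ) + 1, _⟩ = u k
        congr 1
        apply Fin.ext
        show (k : ℕ) - (jf : ℕ) - 1 + (jf : ℕ) + 1 = (k : ℕ)
        omega
  have hbit : Bbit n ℓ X (((jf : ℕ) : ℤ) - m) (shiftΩ n ℓ ((m : ℤ) - (jf : ℕ)) ω)
      = Bbit n ℓ X 0 ω := by
    rw [Bbit_shiftΩ]
    norm_num
  have hx : predC m D ⟨jf, (g,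
        fun t => u ⟨(t : ℕ) + (jf : ℕ) + 1, by have := t.isLt; have := jf.isLt; omega⟩,
        s)⟩
      (fun k : Fin (m - 1) => Bbit n ℓ X ((k : ℤ) + 1 - m) ω)
      = s + (g + (if wP n ℓ m X (jf : ℕ) g u (shiftΩ n ℓ ((m : ℤ) - (jf : ℕ)) ω) ∈ D
          then (0 : ZMod 2) else 1)) := by
    show s + g + (if (fun k : Fin m =>
        if h : (k : ℕ) < (jf : ℕ) then
          (fun k' : Fin (m - 1) => Bbit n ℓ X ((k' : ℤ) + 1 - m) ω)
            ⟨(k : ℕ) + (m - 1) - (jf : ℕ), by have := k.isLt; have := jf.isLt; omega⟩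
        else if (k : ℕ) = (jf : ℕ) then g
        else if h2 : (k : ℕ) - (jf : ℕ) - 1 < m - 1 - (jf : ℕ) then
          (fun t : Fin (m - 1 - (jf : ℕ)) =>
              u ⟨(t : ℕ) + (jf : ℕ) + 1, by have := t.isLt; have := jf.isLt; omega⟩)
            ⟨(k : ℕ) - (jf : ℕ) - 1, h2⟩
        else g) ∈ D then (0 : ZMod 2) else 1) = _
    rw [hword, add_assoc]
  rw [hx, hbit]
lemma zmod2_one_add_iff (a b : ZMod 2) : (1 + a = b) ↔ ¬ (a = b) := by
  revert a b; decide

theorem stmt14 (n ℓ m : ℕ) (hn : 1 ≤ n) (hℓ : 1 ≤ ℓ) (hm : 2 ≤ m) (ε : ℝ) (hε : 0 < ε)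
    (D : Finset (Str m)) :
    ∃ C : Fin (2 ^ (m + 2) - 4) → (Fin (m - 1) → ZMod 2) → ZMod 2,
      ∀ X : Str n → Str n,
        ε < |fr (fun p : (Fin ℓ → Str n) × (Fin ℓ → Str n) =>
                (fun j : Fin m =>
                  ipb (fun i => X (shiftStr n (p.1 i) (j : ℤ))) p.2) ∈ D)
              - (D.card : ℝ) / 2 ^ m| →
        ∃ c : Fin (2 ^ (m + 2) - 4),
          1 / 2 + ε / m ≤ fr (fun p : (Fin ℓ → Str n) × (Fin ℓ → Str n) =>
            C c (fun j : Fin (m - 1) =>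
                ipb (fun i => X (shiftStr n (p.1 i) ((j : ℤ) + 1 - m))) p.2)
              = ipb (fun i => X (p.1 i)) p.2) := by
  have E : ParamSet m ≃ Fin (2 ^ (m + 2) - 4) := Fintype.equivFinOfCardEq (card_ParamSet m)
  refine ⟨fun c => predC m D (E.symm c), ?_⟩
  intro X hX
  have hB0 : ∀ ω : (Fin ℓ → Str n) × (Fin ℓ → Str n),
      ipb (fun i => X (ω.1 i)) ω.2 = Bbit n ℓ X 0 ω := by
    intro ω
    unfold Bbit
    congr 1
    funext i
    rw [shiftStr_zero]
  have hXq : ε < |qf n ℓ m X D m - qf n ℓ m X D 0| := by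
    rw [qf_m, qf_zero]
    exact hX
  obtain ⟨j, hjm, hjd⟩ := telescope_abs (qf n ℓ m X D) m (by omega) ε hXq
  have hm0 : (0:ℝ) < m := by exact_mod_cast (show 0 < m by omega)
  have hεm : 0 < ε / m := div_pos hε hm0
  have hsum := sum_Sgu n ℓ m X D j hjm
  have hprod : ∑ γ : ZMod 2 × Str m, Sgu n ℓ m X D j γ.1 γ.2
      = 2 ^ m + 2 ^ (m+1) * (qf n ℓ m X D (j+1) - qf n ℓ m X D j) := by
    rw [Fintype.sum_prod_type]
    exact hsum
  have hcard2 : (Fintype.card (ZMod 2 × Str m) : ℝ) = 2 ^ (m+1) := by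
    rw [Fintype.card_prod, card_str]
    push_cast [ZMod.card]
    rw [pow_succ]
    ring
  have hps : (2:ℝ) ^ (m+1) = 2 * 2 ^ m := by rw [pow_succ]; ring
  have h2pos : (0:ℝ) < 2 ^ (m+1) := by positivity
  -- helper converting statement fr to Sgu-style fr for a given parameter
  have key : ∀ (g s : ZMod 2) (u : Str m),
      fr (fun p : (Fin ℓ → Str n) × (Fin ℓ → Str n) =>
          (fun c => predC m D (E.symm c))
            (E ⟨⟨j, hjm⟩, (g, fun t => u ⟨(t : ℕ) + j + 1, by have := t.isLt; have hjj : ((⟨j, hjm⟩ : Fin m) : ℕ) = j := rfl; omega⟩, s)⟩)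
            (fun k : Fin (m - 1) =>
              ipb (fun i => X (shiftStr n (p.1 i) ((k : ℤ) + 1 - m))) p.2)
          = ipb (fun i => X (p.1 i)) p.2)
      = fr (fun ω : (Fin ℓ → Str n) × (Fin ℓ → Str n) =>
          s + (g + (if wP n ℓ m X j g u ω ∈ D then (0 : ZMod 2) else 1))
            = Bbit n ℓ X ((j : ℤ) - m) ω) := by
    intro g s u
    have e0 : fr (fun p : (Fin ℓ → Str n) × (Fin ℓ → Str n) =>
          (fun c => predC m D (E.symm c))
            (E ⟨⟨j, hjm⟩, (g, fun t => u ⟨(t : ℕ) + j + 1, by have := t.isLt; have hjj : ((⟨j, hjm⟩ : Fin m) : ℕ) = j := rfl; omega⟩, s)⟩)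
            (fun k : Fin (m - 1) =>
              ipb (fun i => X (shiftStr n (p.1 i) ((k : ℤ) + 1 - m))) p.2)
          = ipb (fun i => X (p.1 i)) p.2)
        = fr (fun ω : (Fin ℓ → Str n) × (Fin ℓ → Str n) =>
            predC m D ⟨⟨j, hjm⟩, (g,
                fun t => u ⟨(t : ℕ) + ((⟨j, hjm⟩ : Fin m) : ℕ) + 1, by
                  have := t.isLt; have := (⟨j, hjm⟩ : Fin m).isLt; omega⟩, s)⟩
              (fun k : Fin (m - 1) => Bbit n ℓ X ((k : ℤ) + 1 - m) ω)
            = Bbit n ℓ X 0 ω) := by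
      apply fr_congr
      intro ω
      rw [hB0 ω]
      simp only [Equiv.symm_apply_apply]
      exact Iff.rfl
    rw [e0, predC_event n ℓ m X D ⟨j, hjm⟩ g s u]
  rcases le_or_gt 0 (qf n ℓ m X D (j+1) - qf n ℓ m X D j) with hpos | hneg
  · -- positive case: s = 0
    rw [abs_of_nonneg hpos] at hjd
    have hex : ∃ γ : ZMod 2 × Str m, 1/2 + ε/m ≤ Sgu n ℓ m X D j γ.1 γ.2 := by
      by_contra hno
      push_neg at hno
      have hlt : ∑ γ : ZMod 2 × Str m, Sgu n ℓ m X D j γ.1 γ.2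
          < ∑ _γ : ZMod 2 × Str m, (1/2 + ε/m) :=
        Finset.sum_lt_sum_of_nonempty Finset.univ_nonempty (fun γ _ => hno γ)
      rw [Finset.sum_const, Finset.card_univ, nsmul_eq_mul, hcard2, hprod] at hlt
      have hmul : 2 ^ (m+1) * (ε/m) < 2 ^ (m+1) * (qf n ℓ m X D (j+1) - qf n ℓ m X D j) :=
        mul_lt_mul_of_pos_left hjd h2pos
      nlinarith
    obtain ⟨⟨g, u⟩, hγ⟩ := hex
    refine ⟨E ⟨⟨j, hjm⟩, (g, fun t => u ⟨(t : ℕ) + j + 1, by have := t.isLt; have hjj : ((⟨j, hjm⟩ : Fin m) : ℕ) = j := rfl; omega⟩, 0)⟩, ?_⟩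
    rw [key g 0 u]
    have e3 : fr (fun ω : (Fin ℓ → Str n) × (Fin ℓ → Str n) =>
          (0:ZMod 2) + (g + (if wP n ℓ m X j g u ω ∈ D then (0 : ZMod 2) else 1))
            = Bbit n ℓ X ((j : ℤ) - m) ω)
        = Sgu n ℓ m X D j g u := by
      unfold Sgu
      apply fr_congr
      intro ω
      rw [zero_add]
    rw [e3]
    exact hγ
  · -- negative case: s = 1
    rw [abs_of_neg (by linarith)] at hjd
    have hprod2 : ∑ γ : ZMod 2 × Str m, (1 - Sgu n ℓ m X D j γ.1 γ.2)
        = 2 ^ m + 2 ^ (m+1) * (-(qf n ℓ m X D (j+1) - qf n ℓ m X D j)) := by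
      rw [Finset.sum_sub_distrib, Finset.sum_const, Finset.card_univ, nsmul_eq_mul,
        mul_one, hcard2, hprod]
      ring
    have hex : ∃ γ : ZMod 2 × Str m, 1/2 + ε/m ≤ 1 - Sgu n ℓ m X D j γ.1 γ.2 := by
      by_contra hno
      push_neg at hno
      have hlt : ∑ γ : ZMod 2 × Str m, (1 - Sgu n ℓ m X D j γ.1 γ.2)
          < ∑ _γ : ZMod 2 × Str m, (1/2 + ε/m) :=
        Finset.sum_lt_sum_of_nonempty Finset.univ_nonempty (fun γ _ => hno γ)
      rw [Finset.sum_const, Finset.card_univ, nsmul_eq_mul, hcard2, hprod2] at hlt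
      have hmul : 2 ^ (m+1) * (ε/m)
          < 2 ^ (m+1) * (-(qf n ℓ m X D (j+1) - qf n ℓ m X D j)) :=
        mul_lt_mul_of_pos_left hjd h2pos
      nlinarith
    obtain ⟨⟨g, u⟩, hγ⟩ := hex
    refine ⟨E ⟨⟨j, hjm⟩, (g, fun t => u ⟨(t : ℕ) + j + 1, by have := t.isLt; have hjj : ((⟨j, hjm⟩ : Fin m) : ℕ) = j := rfl; omega⟩, 1)⟩, ?_⟩
    rw [key g 1 u]
    have e3 : fr (fun ω : (Fin ℓ → Str n) × (Fin ℓ → Str n) =>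
          (1:ZMod 2) + (g + (if wP n ℓ m X j g u ω ∈ D then (0 : ZMod 2) else 1))
            = Bbit n ℓ X ((j : ℤ) - m) ω)
        = 1 - Sgu n ℓ m X D j g u := by
      have e4 : fr (fun ω : (Fin ℓ → Str n) × (Fin ℓ → Str n) =>
            (1:ZMod 2) + (g + (if wP n ℓ m X j g u ω ∈ D then (0 : ZMod 2) else 1))
              = Bbit n ℓ X ((j : ℤ) - m) ω)
          = fr (fun ω : (Fin ℓ → Str n) × (Fin ℓ → Str n) =>
              ¬ ((g + (if wP n ℓ m X j g u ω ∈ D then (0 : ZMod 2) else 1))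
                = Bbit n ℓ X ((j : ℤ) - m) ω)) :=
        fr_congr fun ω => zmod2_one_add_iff _ _
      rw [e4, fr_not]
      rfl
    rw [e3]
    exact hγ
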